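/- Let W ⊆ (ℝmax^n)^2 be either a closed congruence or a closed polar cone, and let s, t ∈ ℝmax^n be such that ¬(s ≤ t̄) (comparing s, viewed in EReal^n, with t̄ entrywise). Then there exists h ∈ ℝmax^n with all entries finite (h_i ∈ ℝ for every i) such that t ≤ h and ¬(s ≤ h̄). -/

import Mathlib

open scoped Classical

noncomputable section

/-- The max-plus semiring `ℝmax = ℝ ∪ {-∞}`. Its `Add` is the max-plus
"multiplication" `a ⊗ b = a + b` (with `-∞` absorbing), its `max` is the
max-plus "addition". -/
abbrev Rmax := WithBot ℝ

/-- The order topology on `WithBot ℝ` (the topology of the metric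
`d(a,b) = |exp a - exp b|`). -/
instance : TopologicalSpace Rmax := Preorder.topology Rmax
instance : OrderTopology Rmax := ⟨rfl⟩

/-- Vectors of the max-plus semimodule `ℝmax^n`. -/
abbrev RmaxVec (n : ℕ) := Fin n → Rmax

/-- The max-plus linear combination `xλ ⊕ yμ`. -/
def maxComb {n : ℕ} (x y : RmaxVec n) (lam mu : Rmax) : RmaxVec n :=
  fun i => max (x i + lam) (y i + mu)

/-- `V ⊆ ℝmax^n` is a (max-plus) subsemimodule. -/
def IsSubsemimodule {n : ℕ} (V : Set (RmaxVec n)) : Prop :=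
  ∀ x ∈ V, ∀ y ∈ V, ∀ lam mu : Rmax, maxComb x y lam mu ∈ V

/-- `W ⊆ (ℝmax^n)² ≅ ℝmax^{2n}` is a (max-plus) subsemimodule,
with the entrywise operations. -/
def IsSubsemimodulePair {n : ℕ} (W : Set (RmaxVec n × RmaxVec n)) : Prop :=
  ∀ p ∈ W, ∀ q ∈ W, ∀ lam mu : Rmax,
    (maxComb p.1 q.1 lam mu, maxComb p.2 q.2 lam mu) ∈ W

/-- A pre-congruence: a subsemimodule of `(ℝmax^n)²` containing the diagonal
and transitive. -/
def IsPrecongruence {n : ℕ} (W : Set (RmaxVec n × RmaxVec n)) : Prop :=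
  IsSubsemimodulePair W ∧ (∀ f : RmaxVec n, (f, f) ∈ W) ∧
    ∀ f g h : RmaxVec n, (f, g) ∈ W → (g, h) ∈ W → (f, h) ∈ W

/-- A polar cone: a pre-congruence such that `f ≤ g` implies `(f,g) ∈ W`. -/
def IsPolarCone {n : ℕ} (W : Set (RmaxVec n × RmaxVec n)) : Prop :=
  IsPrecongruence W ∧ ∀ f g : RmaxVec n, f ≤ g → (f, g) ∈ W

/-- A congruence: a symmetric pre-congruence. -/
def IsCongruence {n : ℕ} (W : Set (RmaxVec n × RmaxVec n)) : Prop :=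
  IsPrecongruence W ∧ ∀ f g : RmaxVec n, (f, g) ∈ W → (g, f) ∈ W

/-- The max-plus bracket `⟨y, x⟩ = max_i (y_i + x_i)`. -/
def mpBracket {n : ℕ} (y x : RmaxVec n) : Rmax :=
  Finset.univ.sup fun i => y i + x i

/-- The polar `V°` of `V ⊆ ℝmax^n`. -/
def mpPolar {n : ℕ} (V : Set (RmaxVec n)) : Set (RmaxVec n × RmaxVec n) :=
  { p | ∀ x ∈ V, mpBracket p.1 x ≤ mpBracket p.2 x }

/-- The orthogonal `V⊥` of `V ⊆ ℝmax^n`. -/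
def mpOrtho {n : ℕ} (V : Set (RmaxVec n)) : Set (RmaxVec n × RmaxVec n) :=
  { p | ∀ x ∈ V, mpBracket p.1 x = mpBracket p.2 x }

/-- The dual polar `W⋄` of `W ⊆ (ℝmax^n)²`. -/
def mpDiamond {n : ℕ} (W : Set (RmaxVec n × RmaxVec n)) : Set (RmaxVec n) :=
  { x | ∀ p ∈ W, mpBracket p.1 x ≤ mpBracket p.2 x }

/-- The dual orthogonal `W⊤` of `W ⊆ (ℝmax^n)²`. -/
def mpTop {n : ℕ} (W : Set (RmaxVec n × RmaxVec n)) : Set (RmaxVec n) :=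
  { x | ∀ p ∈ W, mpBracket p.1 x = mpBracket p.2 x }

/-- The canonical embedding of `ℝmax = ℝ ∪ {-∞}` into `EReal = ℝ ∪ {±∞}`. -/
def toE : Rmax → EReal := WithBot.recBotCoe ⊥ (fun x => (x : EReal))

/-- The entrywise supremum `ḡ ∈ EReal^n` of `{ f | (f,g) ∈ W }`,
computed in `EReal`. -/
def ebar {n : ℕ} (W : Set (RmaxVec n × RmaxVec n)) (g : RmaxVec n) :
    Fin n → EReal :=
  fun i => sSup { a : EReal | ∃ f : RmaxVec n, (f, g) ∈ W ∧ a = toE (f i) }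

/-- The residuation `u∖x = sSup { λ | ∀ i, u_i + λ ≤ x_i }` in `EReal`. -/
def eres {n : ℕ} (u x : Fin n → EReal) : EReal :=
  sSup { lam : EReal | ∀ i, u i + lam ≤ x i }

/-- `z^β`: the vector in `ℝmax^n` obtained from `z ∈ EReal^n` by replacing the
entries equal to `+∞` by `β` and keeping the other entries. -/
def cut {n : ℕ} (z : Fin n → EReal) (b : Rmax) : RmaxVec n :=
  fun i => if z i = ⊤ then b else if z i = ⊥ then ⊥ else ((z i).toReal : ℝ)


lemma rmax_sSup_of_not_bddAbove {s : Set Rmax} (h : ¬BddAbove s) : sSup s = ⊥ := by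
  classical
  exact WithBot.sSup_of_not_bddAbove h

noncomputable instance : ConditionallyCompleteLinearOrder Rmax :=
{ WithBot.conditionallyCompleteLattice, (inferInstance : LinearOrder Rmax) with
  csSup_of_not_bddAbove := fun s hs => by
    rw [rmax_sSup_of_not_bddAbove hs, WithBot.sSup_empty]
  csInf_of_not_bddBelow := fun s hs => absurd (OrderBot.bddBelow s) hs }

-- tendsto lemmas
lemma rmax_tendsto_coe {ι : Type*} {l : Filter ι} {x : ι → ℝ} {r : ℝ}
    (h : Filter.Tendsto x l (nhds r)) :
    Filter.Tendsto (fun k => ((x k : Rmax))) l (nhds (r : Rmax)) := by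
  rw [tendsto_order]
  constructor
  · rintro (_ | a) ha
    · exact Filter.Eventually.of_forall fun k => WithBot.bot_lt_coe _
    · rw [WithBot.some_eq_coe, WithBot.coe_lt_coe] at ha
      have : (a : ℝ) < r := ha
      exact (h.eventually (eventually_gt_nhds this)).mono fun k hk => by
        rw [WithBot.some_eq_coe, WithBot.coe_lt_coe]; exact hk
  · rintro (_ | a) ha
    · exact absurd ha (by rw [WithBot.none_eq_bot]; exact not_lt_bot)
    · rw [WithBot.some_eq_coe] at ha
      have : r < (a : ℝ) := by exact_mod_cast ha
      exact (h.eventually (eventually_lt_nhds this)).mono fun k hk => by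
        rw [WithBot.some_eq_coe, WithBot.coe_lt_coe]; exact hk

lemma rmax_tendsto_bot {ι : Type*} {l : Filter ι} {x : ι → Rmax}
    (h : ∀ C : ℝ, ∀ᶠ k in l, x k ≤ (C : Rmax)) :
    Filter.Tendsto x l (nhds (⊥ : Rmax)) := by
  rw [tendsto_order]
  refine ⟨fun a ha => absurd ha (by simp), ?_⟩
  rintro (_ | a) ha
  · exact absurd ha (lt_irrefl _)
  · rw [WithBot.some_eq_coe] at ha ⊢
    exact (h (a - 1)).mono fun k hk =>
      lt_of_le_of_lt hk (by rw [WithBot.coe_lt_coe]; exact sub_lt_self a one_pos)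

lemma rmax_ulim (U : Ultrafilter ℕ) (x : ℕ → Rmax) (C : ℝ)
    (h : ∀ᶠ k in (U : Filter ℕ), x k ≤ (C : Rmax)) :
    ∃ L, Filter.Tendsto x U (nhds L) := by
  have hc : IsCompact (Set.Icc (⊥ : Rmax) (C : Rmax)) := isCompact_Icc
  have hle : (U.map x : Filter Rmax) ≤ Filter.principal (Set.Icc ⊥ (C : Rmax)) := by
    rw [Filter.le_principal_iff]
    exact Filter.mem_map.2 (h.mono fun k hk => ⟨bot_le, hk⟩)
  obtain ⟨L, _, hL⟩ := hc.ultrafilter_le_nhds (U.map x) hle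
  exact ⟨L, hL⟩

-- basic toE lemmas
@[simp] lemma toE_bot : toE (⊥ : Rmax) = (⊥ : EReal) := rfl
@[simp] lemma toE_coe (x : ℝ) : toE ((x : ℝ) : Rmax) = (x : EReal) := rfl

lemma toE_mono : Monotone toE := by
  rintro (_ | a) (_ | b) hab
  · exact le_refl _
  · exact bot_le
  · exact absurd hab (by rw [WithBot.none_eq_bot]; exact WithBot.not_coe_le_bot a)
  · simp only [WithBot.some_eq_coe] at hab ⊢
    rw [WithBot.coe_le_coe] at hab
    rw [toE_coe, toE_coe]
    exact_mod_cast hab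

def botvec (n : ℕ) : RmaxVec n := fun _ => (⊥ : Rmax)

section W
variable {n : ℕ} {W : Set (RmaxVec n × RmaxVec n)}

lemma W_scale (hsub : IsSubsemimodulePair W) {f g : RmaxVec n}
    (h : (f, g) ∈ W) (c : Rmax) :
    ((fun j => f j + c, fun j => g j + c) : RmaxVec n × RmaxVec n) ∈ W := by
  have h2 := hsub (f, g) h (f, g) h c ⊥
  have e1 : maxComb f f c ⊥ = fun j => f j + c := by
    funext j; simp [maxComb, WithBot.add_bot]
  have e2 : maxComb g g c ⊥ = fun j => g j + c := by
    funext j; simp [maxComb, WithBot.add_bot]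
  rwa [e1, e2] at h2

lemma W_join (hsub : IsSubsemimodulePair W) {f g f' g' : RmaxVec n}
    (h : (f, g) ∈ W) (h' : (f', g') ∈ W) :
    ((fun j => max (f j) (f' j), fun j => max (g j) (g' j)) : RmaxVec n × RmaxVec n) ∈ W := by
  have h2 := hsub (f, g) h (f', g') h' 0 0
  have e1 : maxComb f f' 0 0 = fun j => max (f j) (f' j) := by
    funext j; simp [maxComb]
  have e2 : maxComb g g' 0 0 = fun j => max (g j) (g' j) := by
    funext j; simp [maxComb]
  rwa [e1, e2] at h2

lemma W_absorb (hsub : IsSubsemimodulePair W) (hdiag : ∀ f : RmaxVec n, (f, f) ∈ W)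
    {e : RmaxVec n} (he : (e, botvec n) ∈ W) (c : Rmax) (g : RmaxVec n) :
    ((fun j => max (e j + c) (g j), g) : RmaxVec n × RmaxVec n) ∈ W := by
  have h2 := hsub (e, botvec n) he (g, g) (hdiag g) c 0
  have e1 : maxComb e g c 0 = fun j => max (e j + c) (g j) := by
    funext j; simp [maxComb]
  have e2 : maxComb (botvec n) g c 0 = g := by
    funext j; simp [maxComb, botvec, WithBot.bot_add]
  rwa [e1, e2] at h2
end W

section W2
variable {n : ℕ} {W : Set (RmaxVec n × RmaxVec n)}

lemma exists_shift (f e : RmaxVec n) :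
    ∃ c : ℝ, ∀ j, e j ≠ ⊥ → f j ≤ e j + (c : Rmax) := by
  set vals : Fin n → ℝ := fun j => (f j).unbotD 0 - (e j).unbotD 0 with hvals
  obtain ⟨c, hc⟩ := (Set.finite_range vals).bddAbove
  refine ⟨c, fun j hej => ?_⟩
  have hvj : vals j ≤ c := hc (Set.mem_range_self j)
  obtain ⟨be, hbe⟩ := WithBot.ne_bot_iff_exists.1 hej
  rcases eq_or_ne (f j) ⊥ with hfb | hfnb
  · rw [hfb]; exact bot_le
  obtain ⟨af, haf⟩ := WithBot.ne_bot_iff_exists.1 hfnb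
  rw [← haf, ← hbe, ← WithBot.coe_add, WithBot.coe_le_coe]
  have hveq : vals j = af - be := by
    rw [hvals]; simp [← haf, ← hbe]
  rw [hveq] at hvj
  linarith

/-- Deletion of absorbed coordinates, in a congruence. -/
lemma W_delete (hsub : IsSubsemimodulePair W) (hdiag : ∀ f : RmaxVec n, (f, f) ∈ W)
    (htrans : ∀ f g h : RmaxVec n, (f, g) ∈ W → (g, h) ∈ W → (f, h) ∈ W)
    (hsymm : ∀ f g : RmaxVec n, (f, g) ∈ W → (g, f) ∈ W)
    {e f g : RmaxVec n} (he : (e, botvec n) ∈ W) (hfg : (f, g) ∈ W) :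
    ((fun j => if e j = ⊥ then f j else ⊥), g) ∈ (W : Set (RmaxVec n × RmaxVec n)) := by
  obtain ⟨c, hc⟩ := exists_shift f e
  set a : RmaxVec n := fun j => if e j = ⊥ then f j else ⊥ with ha
  set b : RmaxVec n := fun j => max (e j + (c : Rmax)) (a j) with hb
  have hba : (b, a) ∈ W := W_absorb hsub hdiag he (c : Rmax) a
  have hab : (a, b) ∈ W := hsymm _ _ hba
  have haf : a ≤ f := by
    intro j; rw [ha]; dsimp only; split
    · exact le_refl _
    · exact bot_le
  have hfb : f ≤ b := by
    intro j; rw [hb]; dsimp only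
    by_cases hej : e j = ⊥
    · rw [ha]; dsimp only; rw [if_pos hej]; exact le_max_right _ _
    · exact le_trans (hc j hej) (le_max_left _ _)
  have hfbW : (f, b) ∈ W := by
    have h2 := W_join hsub (hdiag f) hab
    have e1 : (fun j => max (f j) (a j)) = f := by
      funext j; exact max_eq_left (haf j)
    have e2 : (fun j => max (f j) (b j)) = b := by
      funext j; exact max_eq_right (hfb j)
    rwa [e1, e2] at h2
  exact htrans _ _ _ (htrans _ _ _ hab (hsymm _ _ hfbW)) hfg

/-- Capping, in a polar cone. -/
lemma W_cap (htrans : ∀ f g h : RmaxVec n, (f, g) ∈ W → (g, h) ∈ W → (f, h) ∈ W)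
    (hpol : ∀ f g : RmaxVec n, f ≤ g → (f, g) ∈ W)
    {f g : RmaxVec n} (hfg : (f, g) ∈ W) (c : ℝ) :
    ((fun j => min (f j) (c : Rmax)), g) ∈ W :=
  htrans _ f g (hpol _ f (fun j => min_le_left _ _)) hfg

lemma ebar_ge {g f : RmaxVec n} (h : (f, g) ∈ W) (i : Fin n) :
    toE (f i) ≤ ebar W g i :=
  le_sSup ⟨f, h, rfl⟩

lemma ebar_extract {g : RmaxVec n} {i : Fin n} {σ ε : ℝ} (hε : 0 < ε)
    (h : ((σ : ℝ) : EReal) ≤ ebar W g i) :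
    ∃ f : RmaxVec n, (f, g) ∈ W ∧ ((σ - ε : ℝ) : Rmax) < f i := by
  have h2 : (((σ - ε : ℝ)) : EReal) < ebar W g i :=
    lt_of_lt_of_le (by exact_mod_cast sub_lt_self σ hε) h
  obtain ⟨aa, ⟨f, hf, rfl⟩, ha⟩ := lt_sSup_iff.1 h2
  refine ⟨f, hf, ?_⟩
  rcases eq_or_ne (f i) ⊥ with hfb | hfnb
  · rw [hfb] at ha; exact absurd ha (by simp)
  · obtain ⟨af, haf⟩ := WithBot.ne_bot_iff_exists.1 hfnb
    rw [← haf] at ha ⊢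
    rw [toE_coe] at ha
    rw [WithBot.coe_lt_coe]
    exact_mod_cast ha

/-- Taking limits along an ultrafilter inside the closed set `W`. -/
lemma W_lim (hclosed : IsClosed W) (U : Ultrafilter ℕ) (f g : ℕ → RmaxVec n)
    (τ : RmaxVec n) (hmem : ∀ k, (f k, g k) ∈ W)
    (hb : ∀ j, ∃ C : ℝ, ∀ᶠ k in (U : Filter ℕ), f k j ≤ (C : Rmax))
    (hg : ∀ j, Filter.Tendsto (fun k => g k j) U (nhds (τ j))) :
    ∃ F : RmaxVec n, (F, τ) ∈ W ∧ ∀ j, Filter.Tendsto (fun k => f k j) U (nhds (F j)) := by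
  have hF : ∀ j, ∃ L, Filter.Tendsto (fun k => f k j) U (nhds L) := by
    intro j
    obtain ⟨C, hC⟩ := hb j
    exact rmax_ulim U _ C hC
  choose F hFt using hF
  refine ⟨F, ?_, hFt⟩
  have ht : Filter.Tendsto (fun k => (f k, g k)) U (nhds (F, τ)) := by
    apply Filter.Tendsto.prodMk_nhds
    · exact tendsto_pi_nhds.2 hFt
    · exact tendsto_pi_nhds.2 hg
  exact hclosed.mem_of_tendsto ht (Filter.Eventually.of_forall hmem)
end W2

section W3
variable {n : ℕ} {W : Set (RmaxVec n × RmaxVec n)}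

lemma W_bound (hclosed : IsClosed W) (hsub : IsSubsemimodulePair W)
    (hdiag : ∀ f : RmaxVec n, (f, f) ∈ W)
    (htrans : ∀ f g h : RmaxVec n, (f, g) ∈ W → (g, h) ∈ W → (f, h) ∈ W)
    (hsymm : ∀ f g : RmaxVec n, (f, g) ∈ W → (g, f) ∈ W)
    (U : Ultrafilter ℕ) (i0 : Fin n)
    (g : ℕ → RmaxVec n) (Cg : ℝ) (hgbd : ∀ k j, g k j ≤ (Cg : Rmax)) :
    ∀ (m : ℕ) (f : ℕ → RmaxVec n), (∀ k, (f k, g k) ∈ W) →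
      (∃ Ci : ℝ, ∀ᶠ k in (U : Filter ℕ), f k i0 ≤ (Ci : Rmax)) →
      (Finset.univ.filter
        (fun j => ¬ ∃ C : ℝ, ∀ᶠ k in (U : Filter ℕ), f k j ≤ (C : Rmax))).card ≤ m →
      ∃ f' : ℕ → RmaxVec n, (∀ k, (f' k, g k) ∈ W) ∧ (∀ k, f' k i0 = f k i0) ∧
        ∀ j, ∃ C : ℝ, ∀ᶠ k in (U : Filter ℕ), f' k j ≤ (C : Rmax) := by
  intro m
  induction m with
  | zero =>
    intro f hmem _ hcard
    refine ⟨f, hmem, fun k => rfl, fun j => ?_⟩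
    by_contra hj
    have : j ∈ Finset.univ.filter
        (fun j => ¬ ∃ C : ℝ, ∀ᶠ k in (U : Filter ℕ), f k j ≤ (C : Rmax)) :=
      Finset.mem_filter.2 ⟨Finset.mem_univ _, hj⟩
    have := Finset.card_pos.2 ⟨j, this⟩
    omega
  | succ m ih =>
    intro f hmem hi0bd hcard
    set P : Fin n → Prop := fun j => ∃ C : ℝ, ∀ᶠ k in (U : Filter ℕ), f k j ≤ (C : Rmax)
      with hP
    set J : Finset (Fin n) := Finset.univ.filter (fun j => ¬ P j) with hJ
    by_cases hJe : J = ∅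
    · refine ⟨f, hmem, fun k => rfl, fun j => ?_⟩
      by_contra hj
      have : j ∈ J := Finset.mem_filter.2 ⟨Finset.mem_univ _, hj⟩
      rw [hJe] at this
      exact absurd this (Finset.notMem_empty _)
    have hJne : J.Nonempty := Finset.nonempty_iff_ne_empty.2 hJe
    obtain ⟨j0, hj0⟩ := hJne
    have hj0P : ¬ P j0 := (Finset.mem_filter.1 hj0).2
    -- unboundedness
    have hunb : ∀ j, ¬ P j → ∀ C : ℝ, ∀ᶠ k in (U : Filter ℕ), (C : Rmax) < f k j := by
      intro j hj C
      have h1 : ¬ ∀ᶠ k in (U : Filter ℕ), f k j ≤ (C : Rmax) := fun h => hj ⟨C, h⟩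
      have h2 : ∀ᶠ k in (U : Filter ℕ), ¬ f k j ≤ (C : Rmax) :=
        (Ultrafilter.eventually_not (f := U)).2 h1
      exact h2.mono fun k hk => not_le.1 hk
    set mx : ℕ → Rmax := fun k => J.sup (fun j => f k j) with hmx
    set ν : ℕ → ℝ := fun k => -((mx k).unbotD 0) with hν
    have hA : ∀ᶠ k in (U : Filter ℕ), ((0 : ℝ) : Rmax) < f k j0 := hunb j0 hj0P 0
    have hm_eq : ∀ k, ((0 : ℝ) : Rmax) < f k j0 → mx k = ((-(ν k) : ℝ) : Rmax) := by
      intro k hk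
      have h1 : ((0 : ℝ) : Rmax) < mx k :=
        lt_of_lt_of_le hk (Finset.le_sup (f := fun j => f k j) hj0)
      have h2 : mx k ≠ ⊥ := fun h => by rw [h] at h1; exact absurd h1 (by simp)
      obtain ⟨r, hr⟩ := WithBot.ne_bot_iff_exists.1 h2
      rw [← hr]
      congr 1
      simp [hν, ← hr]
    -- ν tends to -∞ along U
    have hνlim : ∀ C : ℝ, ∀ᶠ k in (U : Filter ℕ), ν k < C := by
      intro C
      filter_upwards [hunb j0 hj0P (max 0 (-C)), hA] with k hk hk0
      have h1 : ((max 0 (-C) : ℝ) : Rmax) < mx k :=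
        lt_of_lt_of_le hk (Finset.le_sup (f := fun j => f k j) hj0)
      rw [hm_eq k hk0, WithBot.coe_lt_coe] at h1
      have := le_max_right 0 (-C)
      linarith
    -- coordinates in J are eventually ≤ 0 after shift
    have hc2 : ∀ j ∈ J, ∀ᶠ k in (U : Filter ℕ),
        f k j + ((ν k : ℝ) : Rmax) ≤ ((0 : ℝ) : Rmax) := by
      intro j hj
      filter_upwards [hA] with k hk0
      have h1 : f k j ≤ mx k := Finset.le_sup (f := fun j => f k j) hj
      rw [hm_eq k hk0] at h1
      calc f k j + ((ν k : ℝ) : Rmax) ≤ ((-(ν k) : ℝ) : Rmax) + ((ν k : ℝ) : Rmax) :=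
            add_le_add_left h1 _
        _ = ((0 : ℝ) : Rmax) := by rw [← WithBot.coe_add]; norm_num
    -- coordinates not in J tend to ⊥ after shift
    have hc3 : ∀ j, j ∉ J → Filter.Tendsto (fun k => f k j + ((ν k : ℝ) : Rmax)) U
        (nhds (⊥ : Rmax)) := by
      intro j hj
      have hPj : P j := by
        by_contra h
        exact hj (Finset.mem_filter.2 ⟨Finset.mem_univ _, h⟩)
      obtain ⟨Cj, hCj⟩ := hPj
      apply rmax_tendsto_bot
      intro C
      filter_upwards [hCj, hνlim (C - Cj)] with k hk1 hk2
      calc f k j + ((ν k : ℝ) : Rmax) ≤ (Cj : Rmax) + ((C - Cj : ℝ) : Rmax) :=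
            add_le_add hk1 (by rw [WithBot.coe_le_coe]; linarith)
        _ = (C : Rmax) := by rw [← WithBot.coe_add]; norm_num
    -- g side tends to ⊥ after shift
    have hc4 : ∀ j, Filter.Tendsto (fun k => g k j + ((ν k : ℝ) : Rmax)) U
        (nhds (⊥ : Rmax)) := by
      intro j
      apply rmax_tendsto_bot
      intro C
      filter_upwards [hνlim (C - Cg)] with k hk2
      calc g k j + ((ν k : ℝ) : Rmax) ≤ (Cg : Rmax) + ((C - Cg : ℝ) : Rmax) :=
            add_le_add (hgbd k j) (by rw [WithBot.coe_le_coe]; linarith)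
        _ = (C : Rmax) := by rw [← WithBot.coe_add]; norm_num
    -- limits of the shifted f
    have hlim : ∀ j, ∃ L, Filter.Tendsto (fun k => f k j + ((ν k : ℝ) : Rmax)) U (nhds L)
        ∧ (j ∉ J → L = ⊥) := by
      intro j
      by_cases hj : j ∈ J
      · obtain ⟨L, hL⟩ := rmax_ulim U _ 0 (hc2 j hj)
        exact ⟨L, hL, fun h => absurd hj h⟩
      · exact ⟨⊥, hc3 j hj, fun _ => rfl⟩
    choose e helim using hlim
    have he_mem : (e, botvec n) ∈ W := by
      have ht : Filter.Tendsto
          (fun k => ((fun j => f k j + ((ν k : ℝ) : Rmax)),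
                     (fun j => g k j + ((ν k : ℝ) : Rmax)))) U (nhds (e, botvec n)) := by
        apply Filter.Tendsto.prodMk_nhds
        · exact tendsto_pi_nhds.2 fun j => (helim j).1
        · exact tendsto_pi_nhds.2 fun j => hc4 j
      exact hclosed.mem_of_tendsto ht
        (Filter.Eventually.of_forall fun k => W_scale hsub (hmem k) _)
    -- the argmax coordinate
    have hsel : ∀ k, ∃ j, j ∈ J ∧ mx k = f k j := by
      intro k
      obtain ⟨j, hj1, hj2⟩ := Finset.exists_mem_eq_sup J ⟨j0, hj0⟩ (fun j => f k j)
      exact ⟨j, hj1, hj2⟩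
    choose sel hselJ hselE using hsel
    have hcover : (⋃ j ∈ (J : Set (Fin n)), {k | sel k = j}) ∈ U := by
      have : (⋃ j ∈ (J : Set (Fin n)), {k | sel k = j}) = Set.univ := by
        ext k
        simp only [Set.mem_iUnion, Set.mem_setOf_eq, Set.mem_univ, iff_true]
        exact ⟨sel k, hselJ k, rfl⟩
      rw [this]
      exact Filter.univ_mem
    obtain ⟨js, hjsJ, hjs⟩ := (Ultrafilter.finite_biUnion_mem_iff J.finite_toSet).1 hcover
    have hconst : ∀ᶠ k in (U : Filter ℕ),
        f k js + ((ν k : ℝ) : Rmax) = ((0 : ℝ) : Rmax) := by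
      filter_upwards [hA, hjs] with k hk0 hks
      have h1 : f k js = ((-(ν k) : ℝ) : Rmax) := by
        rw [← hm_eq k hk0, hselE k, hks]
      rw [h1, ← WithBot.coe_add]
      norm_num
    have hejs : e js = ((0 : ℝ) : Rmax) := by
      refine tendsto_nhds_unique (helim js).1 ?_
      exact Filter.Tendsto.congr' (hconst.mono fun k hk => hk.symm) tendsto_const_nhds
    have hejs_ne : e js ≠ ⊥ := by rw [hejs]; exact WithBot.coe_ne_bot
    have hi0nJ : i0 ∉ J := by
      intro h
      exact (Finset.mem_filter.1 h).2 hi0bd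
    have hei0 : e i0 = ⊥ := (helim i0).2 hi0nJ
    -- the deleted sequence
    set φ : ℕ → RmaxVec n := fun k => fun j => if e j = ⊥ then f k j else ⊥ with hφ
    have hφmem : ∀ k, (φ k, g k) ∈ W := fun k =>
      W_delete hsub hdiag htrans hsymm he_mem (hmem k)
    have hφi0 : ∀ k, φ k i0 = f k i0 := fun k => if_pos hei0
    have hφbd : ∃ Ci : ℝ, ∀ᶠ k in (U : Filter ℕ), φ k i0 ≤ (Ci : Rmax) := by
      obtain ⟨Ci, hCi⟩ := hi0bd
      exact ⟨Ci, hCi.mono fun k hk => by rw [hφi0 k]; exact hk⟩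
    have hsubset : Finset.univ.filter
        (fun j => ¬ ∃ C : ℝ, ∀ᶠ k in (U : Filter ℕ), φ k j ≤ (C : Rmax)) ⊆ J.erase js := by
      intro j hj
      have hj' : ¬ ∃ C : ℝ, ∀ᶠ k in (U : Filter ℕ), φ k j ≤ (C : Rmax) :=
        (Finset.mem_filter.1 hj).2
      rw [Finset.mem_erase]
      constructor
      · rintro rfl
        refine hj' ⟨0, Filter.Eventually.of_forall fun k => ?_⟩
        rw [hφ]
        simp only [if_neg hejs_ne]
        exact bot_le
      · by_contra hjJ
        have hej : e j = ⊥ := (helim j).2 hjJ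
        have hPj : P j := by
          by_contra h
          exact hjJ (Finset.mem_filter.2 ⟨Finset.mem_univ _, h⟩)
        obtain ⟨Cj, hCj⟩ := hPj
        refine hj' ⟨Cj, hCj.mono fun k hk => ?_⟩
        rw [hφ]
        simp only [if_pos hej]
        exact hk
    have hcard' : (Finset.univ.filter
        (fun j => ¬ ∃ C : ℝ, ∀ᶠ k in (U : Filter ℕ), φ k j ≤ (C : Rmax))).card ≤ m := by
      have h1 := Finset.card_le_card hsubset
      have h2 : (J.erase js).card = J.card - 1 := Finset.card_erase_of_mem hjsJ
      have h3 : 1 ≤ J.card := Finset.card_pos.2 ⟨js, hjsJ⟩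
      omega
    obtain ⟨f', hf'mem, hf'i0, hf'bd⟩ := ih φ hφmem hφbd hcard'
    exact ⟨f', hf'mem, fun k => by rw [hf'i0 k, hφi0 k], hf'bd⟩
end W3


/-- Lemma 4.6 of the paper: if `W ⊆ (ℝmax^n)²` is a closed congruence or a
closed polar cone and `¬(s ≤ t̄)`, then there exists `h ∈ ℝmax^n` with finite
entries such that `t ≤ h` and `¬(s ≤ h̄)`. -/
theorem exists_finite_perturbation (n : ℕ) (W : Set (RmaxVec n × RmaxVec n))
    (hclosed : IsClosed W) (hW : IsCongruence W ∨ IsPolarCone W)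
    (s t : RmaxVec n) (hs : ¬ ∀ i, toE (s i) ≤ ebar W t i) :
    ∃ h : RmaxVec n, (∀ i, h i ≠ ⊥) ∧ t ≤ h ∧ ¬ ∀ i, toE (s i) ≤ ebar W h i := by
  by_contra hcon
  push_neg at hcon
  rw [not_forall] at hs
  obtain ⟨i0, hi0⟩ := hs
  rw [not_le] at hi0
  have hpre : IsPrecongruence W := by rcases hW with h | h; exacts [h.1, h.1]
  obtain ⟨hsub, hdiag, htrans⟩ := hpre
  -- s i0 is a real number
  have hsne : s i0 ≠ ⊥ := by
    intro h
    rw [h, toE_bot] at hi0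
    exact absurd hi0 (by simp)
  obtain ⟨σ, hσ⟩ := WithBot.ne_bot_iff_exists.1 hsne
  have hsE : toE (s i0) = ((σ : ℝ) : EReal) := by rw [← hσ, toE_coe]
  -- the finite approximations of t
  set hseq : ℕ → RmaxVec n :=
    fun k j => if t j = ⊥ then ((-(k : ℝ) : ℝ) : Rmax) else t j with hhseq
  have hhne : ∀ k j, hseq k j ≠ ⊥ := by
    intro k j
    rw [hhseq]; dsimp only; split
    · exact WithBot.coe_ne_bot
    · assumption
  have hth : ∀ k, t ≤ hseq k := by
    intro k j
    rw [hhseq]; dsimp only; split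
    · rename_i h; rw [h]; exact bot_le
    · exact le_refl _
  have hkey : ∀ k, ((σ : ℝ) : EReal) ≤ ebar W (hseq k) i0 := fun k =>
    hsE ▸ hcon (hseq k) (hhne k) (hth k) i0
  -- uniform upper bound on the hseq
  obtain ⟨Ct, hCt⟩ := (Set.finite_range (fun j => (t j).unbotD 0)).bddAbove
  set Cg : ℝ := max Ct 0 with hCg
  have htbd : ∀ j, t j ≤ (Cg : Rmax) := by
    intro j
    rcases eq_or_ne (t j) ⊥ with hb | hnb
    · rw [hb]; exact bot_le
    · obtain ⟨r, hr⟩ := WithBot.ne_bot_iff_exists.1 hnb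
      rw [← hr, WithBot.coe_le_coe]
      have : (t j).unbotD 0 ≤ Ct := hCt (Set.mem_range_self j)
      rw [← hr] at this
      simp only [WithBot.unbotD_coe] at this
      exact le_trans this (le_max_left _ _)
  have hgbd : ∀ k j, hseq k j ≤ (Cg : Rmax) := by
    intro k j
    rw [hhseq]; dsimp only; split
    · rw [WithBot.coe_le_coe]
      have h0 : (0:ℝ) ≤ Cg := le_max_right _ _
      have : -(k:ℝ) ≤ 0 := neg_nonpos.2 (Nat.cast_nonneg k)
      linarith
    · exact htbd j
  -- choice of near-optimal f k
  have hfex : ∀ k : ℕ, ∃ f : RmaxVec n, (f, hseq k) ∈ W ∧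
      ((σ - 1/((k:ℝ)+1) : ℝ) : Rmax) < f i0 := by
    intro k
    exact ebar_extract (by positivity) (hkey k)
  choose f hfmem hflt using hfex
  set U : Ultrafilter ℕ := Ultrafilter.of Filter.atTop with hU
  have hUle : (U : Filter ℕ) ≤ Filter.atTop := Ultrafilter.of_le _
  -- ρ k := σ - 1/(k+1) tends to σ
  have hρreal : Filter.Tendsto (fun k : ℕ => (σ - 1/((k:ℝ)+1) : ℝ)) Filter.atTop (nhds σ) := by
    have h1 := tendsto_one_div_add_atTop_nhds_zero_nat (𝕜 := ℝ)
    have := Filter.Tendsto.sub (tendsto_const_nhds (x := σ)) h1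
    simpa using this
  have hρ : Filter.Tendsto (fun k : ℕ => ((σ - 1/((k:ℝ)+1) : ℝ) : Rmax)) U
      (nhds ((σ : ℝ) : Rmax)) := rmax_tendsto_coe (hρreal.mono_left hUle)
  -- hseq tends to t coordinatewise
  have hgt : ∀ j, Filter.Tendsto (fun k => hseq k j) U (nhds (t j)) := by
    intro j
    rcases eq_or_ne (t j) ⊥ with hb | hnb
    · rw [hb]
      have : Filter.Tendsto (fun k : ℕ => ((-(k:ℝ) : ℝ) : Rmax)) Filter.atTop
          (nhds (⊥ : Rmax)) := by
        apply rmax_tendsto_bot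
        intro C
        obtain ⟨N, hN⟩ := exists_nat_ge (-C)
        rw [Filter.eventually_atTop]
        refine ⟨N, fun k hk => ?_⟩
        rw [WithBot.coe_le_coe]
        have : (N:ℝ) ≤ (k:ℝ) := by exact_mod_cast hk
        linarith
      have h2 : (fun k => hseq k j) = fun k : ℕ => ((-(k:ℝ) : ℝ) : Rmax) := by
        funext k; rw [hhseq]; dsimp only; rw [if_pos hb]
      rw [h2]
      exact this.mono_left hUle
    · have h2 : (fun k => hseq k j) = fun _ : ℕ => t j := by
        funext k; rw [hhseq]; dsimp only; rw [if_neg hnb]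
      rw [h2]
      exact tendsto_const_nhds
  -- the final contradiction step
  have hfinal : ∀ F : RmaxVec n, (F, t) ∈ W → ((σ : ℝ) : Rmax) ≤ F i0 → False := by
    intro F hF hle
    have h1 : toE (F i0) ≤ ebar W t i0 := ebar_ge hF i0
    have h2 : ((σ : ℝ) : EReal) ≤ toE (F i0) := by
      calc ((σ : ℝ) : EReal) = toE ((σ : ℝ) : Rmax) := (toE_coe σ).symm
        _ ≤ toE (F i0) := toE_mono hle
    rw [hsE] at hi0
    exact absurd (le_trans h2 h1) (not_le.2 hi0)
  have hcardn : ∀ (ff : ℕ → RmaxVec n), (Finset.univ.filter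
      (fun j => ¬ ∃ C : ℝ, ∀ᶠ k in (U : Filter ℕ), ff k j ≤ (C : Rmax))).card ≤ n :=
    fun ff => (Finset.card_filter_le _ _).trans (by simp)
  rcases hW with hC | hP
  · -- congruence case
    obtain ⟨_, hsymm⟩ := hC
    by_cases hb : ∃ Ci : ℝ, ∀ᶠ k in (U : Filter ℕ), f k i0 ≤ (Ci : Rmax)
    · -- the value at i0 stays bounded along U
      obtain ⟨f', hf'mem, hf'i0, hf'bd⟩ :=
        W_bound hclosed hsub hdiag htrans hsymm U i0 hseq Cg hgbd n f hfmem hb (hcardn f)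
      obtain ⟨F, hFmem, hFt⟩ := W_lim hclosed U f' hseq t hf'mem hf'bd hgt
      have hFi0 : ((σ : ℝ) : Rmax) ≤ F i0 := by
        refine le_of_tendsto_of_tendsto hρ (hFt i0) ?_
        refine Filter.Eventually.of_forall fun k => ?_
        show ((σ - 1/((k:ℝ)+1) : ℝ) : Rmax) ≤ f' k i0
        rw [hf'i0 k]; exact (hflt k).le
      exact hfinal F hFmem hFi0
    · -- the value at i0 blows up along U : renormalize
      have hfne : ∀ k, f k i0 ≠ ⊥ := fun k => ne_bot_of_gt (hflt k)
      choose r hr using fun k => WithBot.ne_bot_iff_exists.1 (hfne k)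
      set lam : ℕ → ℝ := fun k => σ - r k with hlam
      set f2 : ℕ → RmaxVec n := fun k j => f k j + ((lam k : ℝ) : Rmax) with hf2
      set g2 : ℕ → RmaxVec n := fun k j => hseq k j + ((lam k : ℝ) : Rmax) with hg2
      have hmem2 : ∀ k, (f2 k, g2 k) ∈ W := fun k => W_scale hsub (hfmem k) _
      have hf2i0 : ∀ k, f2 k i0 = ((σ : ℝ) : Rmax) := by
        intro k
        rw [hf2]; dsimp only
        rw [← hr k, ← WithBot.coe_add]
        congr 1
        rw [hlam]; ring
      have hlam1 : ∀ k, lam k ≤ 1 := by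
        intro k
        have h1 := hflt k
        rw [← hr k, WithBot.coe_lt_coe] at h1
        have h2 : 1/((k:ℝ)+1) ≤ 1 := by
          rw [div_le_one (by positivity)]
          have : (0:ℝ) ≤ (k:ℝ) := Nat.cast_nonneg k
          linarith
        rw [hlam]; dsimp only; linarith
      have hg2bd : ∀ k j, g2 k j ≤ ((Cg + 1 : ℝ) : Rmax) := by
        intro k j
        rw [hg2]; dsimp only
        calc hseq k j + ((lam k : ℝ) : Rmax) ≤ (Cg : Rmax) + ((1:ℝ) : Rmax) :=
              add_le_add (hgbd k j) (by rw [WithBot.coe_le_coe]; exact hlam1 k)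
          _ = ((Cg + 1 : ℝ) : Rmax) := by rw [← WithBot.coe_add]
      have hunbi0 : ∀ C : ℝ, ∀ᶠ k in (U : Filter ℕ), (C : Rmax) < f k i0 := by
        intro C
        have h1 : ¬ ∀ᶠ k in (U : Filter ℕ), f k i0 ≤ (C : Rmax) := fun h => hb ⟨C, h⟩
        exact ((Ultrafilter.eventually_not (f := U)).2 h1).mono fun k hk => not_le.1 hk
      have hlamlim : ∀ C : ℝ, ∀ᶠ k in (U : Filter ℕ), lam k < C := by
        intro C
        filter_upwards [hunbi0 (σ - C)] with k hk
        rw [← hr k, WithBot.coe_lt_coe] at hk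
        rw [hlam]; dsimp only; linarith
      have hg2t : ∀ j, Filter.Tendsto (fun k => g2 k j) U (nhds (botvec n j)) := by
        intro j
        have : botvec n j = (⊥ : Rmax) := rfl
        rw [this]
        apply rmax_tendsto_bot
        intro C
        filter_upwards [hlamlim (C - Cg)] with k hk
        rw [hg2]; dsimp only
        calc hseq k j + ((lam k : ℝ) : Rmax) ≤ (Cg : Rmax) + ((C - Cg : ℝ) : Rmax) :=
              add_le_add (hgbd k j) (by rw [WithBot.coe_le_coe]; linarith)
          _ = (C : Rmax) := by rw [← WithBot.coe_add]; norm_num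
      have hf2bd : ∃ Ci : ℝ, ∀ᶠ k in (U : Filter ℕ), f2 k i0 ≤ (Ci : Rmax) :=
        ⟨σ, Filter.Eventually.of_forall fun k => (hf2i0 k).le⟩
      obtain ⟨f', hf'mem, hf'i0, hf'bd⟩ :=
        W_bound hclosed hsub hdiag htrans hsymm U i0 g2 (Cg + 1) hg2bd n f2 hmem2 hf2bd
          (hcardn f2)
      obtain ⟨F, hFmem, hFt⟩ := W_lim hclosed U f' g2 (botvec n) hf'mem hf'bd hg2t
      have hFi0 : ((σ : ℝ) : Rmax) ≤ F i0 := by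
        refine le_of_tendsto_of_tendsto tendsto_const_nhds (hFt i0) ?_
        refine Filter.Eventually.of_forall fun k => ?_
        show ((σ : ℝ) : Rmax) ≤ f' k i0
        rw [hf'i0 k, hf2i0 k]
      have habs := W_absorb hsub hdiag hFmem ((0:ℝ) : Rmax) t
      apply hfinal _ habs
      calc ((σ : ℝ) : Rmax) ≤ F i0 := hFi0
        _ = F i0 + ((0:ℝ) : Rmax) := by
            rcases eq_or_ne (F i0) ⊥ with hbb | hnb
            · rw [hbb, WithBot.bot_add]
            · obtain ⟨rr, hrr⟩ := WithBot.ne_bot_iff_exists.1 hnb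
              rw [← hrr, ← WithBot.coe_add, add_zero]
        _ ≤ max (F i0 + ((0:ℝ) : Rmax)) (t i0) := le_max_left _ _
  · -- polar cone case
    obtain ⟨_, hpol⟩ := hP
    set cap : ℝ := max σ 0 + 1 with hcap
    set φ : ℕ → RmaxVec n := fun k j => min (f k j) (cap : Rmax) with hφ
    have hφmem : ∀ k, (φ k, hseq k) ∈ W := fun k => W_cap htrans hpol (hfmem k) cap
    have hφbd : ∀ j, ∃ C : ℝ, ∀ᶠ k in (U : Filter ℕ), φ k j ≤ (C : Rmax) := fun j =>
      ⟨cap, Filter.Eventually.of_forall fun k => min_le_right _ _⟩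
    obtain ⟨F, hFmem, hFt⟩ := W_lim hclosed U φ hseq t hφmem hφbd hgt
    have hFi0 : ((σ : ℝ) : Rmax) ≤ F i0 := by
      refine le_of_tendsto_of_tendsto hρ (hFt i0) ?_
      refine Filter.Eventually.of_forall fun k => ?_
      rw [hφ]; dsimp only
      refine le_min (hflt k).le ?_
      rw [WithBot.coe_le_coe, hcap]
      have h2 : 0 < 1/((k:ℝ)+1) := by positivity
      have h3 : σ ≤ max σ 0 := le_max_left _ _
      linarith
    exact hfinal F hFmem hFi0
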